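/- Fix integers k ≥ 1, s ≥ 0, t ≥ 0 and let p(x,y,z) be a real polynomial that is homogeneous of degree k with y-degree at most s and z-degree at most t. Set h(x,u) = p(x, u−1, u). Suppose w is a real-valued function, differentiable at 0, with w(0) = w₀ and Q^θ_{s,t}[p](0, w(θ)−1, w(θ)) = 0 for all θ in a neighborhood of 0. Then w'(0)·∂_u h(0, w₀) = −[(s−k+1)(w₀−1) + (t−k+1)w₀]·∂_x h(0, w₀) − w₀(w₀−1)·∂_u∂_x h(0, w₀). -/

import Mathlib

open MvPolynomial

noncomputable section

/-- The operator `Q^θ_{s,t}`, defined on monomials by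
`x^i y^j z^l ↦ (1 + θy∂_x)^(s−j) (1 + θz∂_x)^(t−l) [x^i y^j z^l]` and extended linearly.
Here `x = X 0`, `y = X 1`, `z = X 2`. -/
def Qop (s t : ℕ) (θ : ℝ) (p : MvPolynomial (Fin 3) ℝ) : MvPolynomial (Fin 3) ℝ :=
  ∑ m ∈ p.support,
    (fun q => q + θ • ((X 1 : MvPolynomial (Fin 3) ℝ) * pderiv 0 q))^[s - m 1]
      ((fun q => q + θ • ((X 2 : MvPolynomial (Fin 3) ℝ) * pderiv 0 q))^[t - m 2]
        (monomial m (coeff m p)))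

/-- `h(x,u) = p(x, u−1, u)`, as a polynomial in `x = X 0` and `u = X 1`. -/
def hSub (p : MvPolynomial (Fin 3) ℝ) : MvPolynomial (Fin 2) ℝ :=
  aeval ![(X 0 : MvPolynomial (Fin 2) ℝ), (X 1 : MvPolynomial (Fin 2) ℝ) - 1,
    (X 1 : MvPolynomial (Fin 2) ℝ)] p

namespace S16


lemma pderiv_aeval_fin {n m : ℕ} (g : Fin n → MvPolynomial (Fin m) ℝ) (j : Fin m)
    (q : MvPolynomial (Fin n) ℝ) :
    pderiv j (aeval g q) = ∑ i, aeval g (pderiv i q) * pderiv j (g i) := by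
  induction q using MvPolynomial.induction_on with
  | C a => simp
  | add p q hp hq => simp only [map_add, hp, hq, Finset.sum_add_distrib, add_mul]
  | mul_X p i hp =>
    rw [map_mul, aeval_X, pderiv_mul, hp]
    have step : ∀ i' : Fin n, (aeval g) ((pderiv i') (p * X i)) * pderiv j (g i')
        = aeval g ((pderiv i') p) * pderiv j (g i') * g i
          + aeval g p * (aeval g ((pderiv i') (X i : MvPolynomial (Fin n) ℝ)) * pderiv j (g i')) := by
      intro i'; rw [pderiv_mul]; simp only [map_add, map_mul, aeval_X]; ring
    rw [Finset.sum_congr rfl fun i' _ => step i', Finset.sum_add_distrib,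
      ← Finset.sum_mul, ← Finset.mul_sum]
    congr 1
    rw [Finset.sum_eq_single i]
    · simp
    · intro b _ hb; simp [pderiv_X_of_ne (Ne.symm hb)]
    · simp

lemma eval_aeval_fin {n m : ℕ} (v : Fin m → ℝ) (g : Fin n → MvPolynomial (Fin m) ℝ)
    (q : MvPolynomial (Fin n) ℝ) :
    eval v (aeval g q) = eval (fun i => eval v (g i)) q := by
  induction q using MvPolynomial.induction_on with
  | C a => simp
  | add p q hp hq => simp only [map_add, hp, hq]
  | mul_X p i hp => simp only [map_mul, aeval_X, eval_mul, eval_X, hp]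


/-- step map in 4 variables: θ = X 0, x = X 1, y = X 2, z = X 3 -/
def SY (q : MvPolynomial (Fin 4) ℝ) : MvPolynomial (Fin 4) ℝ := q + X 0 * (X 2 * pderiv 1 q)
def SZ (q : MvPolynomial (Fin 4) ℝ) : MvPolynomial (Fin 4) ℝ := q + X 0 * (X 3 * pderiv 1 q)

def Q4 (s t : ℕ) (p : MvPolynomial (Fin 3) ℝ) : MvPolynomial (Fin 4) ℝ :=
  ∑ m ∈ p.support, SY^[s - m 1] (SZ^[t - m 2] (rename Fin.succ (monomial m (coeff m p))))

def φh (θ : ℝ) : MvPolynomial (Fin 4) ℝ →ₐ[ℝ] MvPolynomial (Fin 3) ℝ :=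
  aeval ![C θ, X 0, X 1, X 2]

lemma φh_pderiv (θ : ℝ) (q : MvPolynomial (Fin 4) ℝ) :
    pderiv 0 (φh θ q) = φh θ (pderiv 1 q) := by
  rw [φh, pderiv_aeval_fin, Fin.sum_univ_four]
  simp [pderiv_X_of_ne]

lemma φh_SY (θ : ℝ) (q : MvPolynomial (Fin 4) ℝ) :
    φh θ (SY q) = φh θ q + θ • ((X 1 : MvPolynomial (Fin 3) ℝ) * pderiv 0 (φh θ q)) := by
  rw [SY, map_add, map_mul, map_mul, φh_pderiv]
  rw [show (φh θ) (X 0) = C θ from by simp [φh]]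
  rw [show (φh θ) (X 2) = (X 1 : MvPolynomial (Fin 3) ℝ) from by simp [φh]]
  rw [smul_eq_C_mul]

lemma φh_SZ (θ : ℝ) (q : MvPolynomial (Fin 4) ℝ) :
    φh θ (SZ q) = φh θ q + θ • ((X 2 : MvPolynomial (Fin 3) ℝ) * pderiv 0 (φh θ q)) := by
  rw [SZ, map_add, map_mul, map_mul, φh_pderiv]
  rw [show (φh θ) (X 0) = C θ from by simp [φh]]
  rw [show (φh θ) (X 3) = (X 2 : MvPolynomial (Fin 3) ℝ) from by simp [φh]]
  rw [smul_eq_C_mul]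

lemma φh_SY_iter (θ : ℝ) (n : ℕ) (q : MvPolynomial (Fin 4) ℝ) :
    φh θ (SY^[n] q)
      = (fun r => r + θ • ((X 1 : MvPolynomial (Fin 3) ℝ) * pderiv 0 r))^[n] (φh θ q) := by
  induction n with
  | zero => rfl
  | succ n ih =>
    rw [Function.iterate_succ_apply', Function.iterate_succ_apply', φh_SY, ih]

lemma φh_SZ_iter (θ : ℝ) (n : ℕ) (q : MvPolynomial (Fin 4) ℝ) :
    φh θ (SZ^[n] q)
      = (fun r => r + θ • ((X 2 : MvPolynomial (Fin 3) ℝ) * pderiv 0 r))^[n] (φh θ q) := by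
  induction n with
  | zero => rfl
  | succ n ih =>
    rw [Function.iterate_succ_apply', Function.iterate_succ_apply', φh_SZ, ih]

lemma φh_rename (θ : ℝ) (r : MvPolynomial (Fin 3) ℝ) : φh θ (rename Fin.succ r) = r := by
  rw [φh, aeval_rename]
  have : (![C θ, X 0, X 1, X 2] ∘ Fin.succ : Fin 3 → MvPolynomial (Fin 3) ℝ) = X := by
    funext i; fin_cases i <;> rfl
  rw [this, aeval_X_left_apply]


lemma φh_Q4 (s t : ℕ) (p : MvPolynomial (Fin 3) ℝ) (θ : ℝ) :
    φh θ (Q4 s t p) = Qop s t θ p := by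
  rw [Q4, Qop, map_sum]
  refine Finset.sum_congr rfl fun m _ => ?_
  rw [φh_SY_iter, φh_SZ_iter, φh_rename]

def gG : Fin 4 → MvPolynomial (Fin 2) ℝ := ![X 0, 0, X 1 - 1, X 1]

def G (s t : ℕ) (p : MvPolynomial (Fin 3) ℝ) : MvPolynomial (Fin 2) ℝ :=
  aeval gG (Q4 s t p)

lemma eval_G (s t : ℕ) (p : MvPolynomial (Fin 3) ℝ) (θ u : ℝ) :
    eval ![θ, u] (G s t p) = eval ![0, u - 1, u] (Qop s t θ p) := by
  rw [G, eval_aeval_fin, ← φh_Q4 s t p θ, φh, eval_aeval_fin]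
  have : (fun i => (eval ![θ, u]) (gG i)) = fun i => (eval ![0, u - 1, u]) (![C θ, X 0, X 1, X 2] i) := by
    funext i; fin_cases i <;> simp [gG]
  rw [this]


lemma hasDerivAt_eval_two (q : MvPolynomial (Fin 2) ℝ) (f g : ℝ → ℝ) (f' g' x : ℝ)
    (hf : HasDerivAt f f' x) (hg : HasDerivAt g g' x) :
    HasDerivAt (fun θ => eval ![f θ, g θ] q)
      (f' * eval ![f x, g x] (pderiv 0 q) + g' * eval ![f x, g x] (pderiv 1 q)) x := by
  induction q using MvPolynomial.induction_on with
  | C a => simpa using hasDerivAt_const x a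
  | add q r hq hr =>
    have := hq.add hr
    simp only [map_add] at this ⊢
    refine this.congr_deriv ?_
    ring
  | mul_X q i hq =>
    fin_cases i
    · simp only [map_mul, eval_X, Matrix.cons_val_zero, pderiv_mul, map_add,
        pderiv_X_self, mul_one, pderiv_X_of_ne (show (0:Fin 2) ≠ 1 by decide)]
      have := hq.mul hf
      refine this.congr_deriv ?_
      simp [pderiv_X, Pi.single_apply]
      ring
    · simp only [map_mul, eval_X, Matrix.cons_val_one, Matrix.head_cons, pderiv_mul, map_add,
        pderiv_X_self, mul_one, pderiv_X_of_ne (show (1:Fin 2) ≠ 0 by decide)]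
      have := hq.mul hg
      refine this.congr_deriv ?_
      simp [pderiv_X, Pi.single_apply]
      ring


def gψ : Fin 4 → MvPolynomial (Fin 4) ℝ := ![0, X 1, X 2, X 3]

def ψ : MvPolynomial (Fin 4) ℝ →ₐ[ℝ] MvPolynomial (Fin 4) ℝ := aeval gψ

lemma ψ_pderiv1 (q : MvPolynomial (Fin 4) ℝ) : pderiv 1 (ψ q) = ψ (pderiv 1 q) := by
  rw [ψ, pderiv_aeval_fin, Fin.sum_univ_four]
  simp [gψ, pderiv_X_of_ne]

lemma ψ_pderiv2 (q : MvPolynomial (Fin 4) ℝ) : pderiv 2 (ψ q) = ψ (pderiv 2 q) := by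
  rw [ψ, pderiv_aeval_fin, Fin.sum_univ_four]
  simp [gψ, pderiv_X_of_ne]

lemma ψ_pderiv3 (q : MvPolynomial (Fin 4) ℝ) : pderiv 3 (ψ q) = ψ (pderiv 3 q) := by
  rw [ψ, pderiv_aeval_fin, Fin.sum_univ_four]
  simp [gψ, pderiv_X_of_ne]

lemma ψ_X0 : ψ (X 0) = 0 := by simp [ψ, gψ]

lemma ψ_SY (q : MvPolynomial (Fin 4) ℝ) : ψ (SY q) = ψ q := by
  rw [SY, map_add, map_mul, ψ_X0, zero_mul, add_zero]

lemma ψ_SZ (q : MvPolynomial (Fin 4) ℝ) : ψ (SZ q) = ψ q := by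
  rw [SZ, map_add, map_mul, ψ_X0, zero_mul, add_zero]

lemma ψ_SY_iter (n : ℕ) (q : MvPolynomial (Fin 4) ℝ) : ψ (SY^[n] q) = ψ q := by
  induction n with
  | zero => rfl
  | succ n ih => rw [Function.iterate_succ_apply', ψ_SY, ih]

lemma ψ_SZ_iter (n : ℕ) (q : MvPolynomial (Fin 4) ℝ) : ψ (SZ^[n] q) = ψ q := by
  induction n with
  | zero => rfl
  | succ n ih => rw [Function.iterate_succ_apply', ψ_SZ, ih]

lemma ψ_pd0_SY (q : MvPolynomial (Fin 4) ℝ) :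
    ψ (pderiv 0 (SY q)) = ψ (pderiv 0 q) + X 2 * pderiv 1 (ψ q) := by
  rw [SY, map_add, pderiv_mul, pderiv_X_self, one_mul]
  rw [map_add, map_add, map_mul, map_mul, ψ_X0, zero_mul, add_zero, ψ_pderiv1]
  rw [show ψ (X 2) = (X 2 : MvPolynomial (Fin 4) ℝ) from by simp [ψ, gψ]]

lemma ψ_pd0_SZ (q : MvPolynomial (Fin 4) ℝ) :
    ψ (pderiv 0 (SZ q)) = ψ (pderiv 0 q) + X 3 * pderiv 1 (ψ q) := by
  rw [SZ, map_add, pderiv_mul, pderiv_X_self, one_mul]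
  rw [map_add, map_add, map_mul, map_mul, ψ_X0, zero_mul, add_zero, ψ_pderiv1]
  rw [show ψ (X 3) = (X 3 : MvPolynomial (Fin 4) ℝ) from by simp [ψ, gψ]]

lemma ψ_pd0_SY_iter (n : ℕ) (q : MvPolynomial (Fin 4) ℝ) :
    ψ (pderiv 0 (SY^[n] q)) = ψ (pderiv 0 q) + n • (X 2 * pderiv 1 (ψ q)) := by
  induction n with
  | zero => simp
  | succ n ih =>
    rw [Function.iterate_succ_apply', ψ_pd0_SY, ih, ψ_SY_iter, succ_nsmul]
    ring

lemma ψ_pd0_SZ_iter (n : ℕ) (q : MvPolynomial (Fin 4) ℝ) :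
    ψ (pderiv 0 (SZ^[n] q)) = ψ (pderiv 0 q) + n • (X 3 * pderiv 1 (ψ q)) := by
  induction n with
  | zero => simp
  | succ n ih =>
    rw [Function.iterate_succ_apply', ψ_pd0_SZ, ih, ψ_SZ_iter, succ_nsmul]
    ring

lemma ψ_rename (r : MvPolynomial (Fin 3) ℝ) : ψ (rename Fin.succ r) = rename Fin.succ r := by
  rw [ψ, aeval_rename]
  have : (gψ ∘ Fin.succ : Fin 3 → MvPolynomial (Fin 4) ℝ) = fun i => X (Fin.succ i) := by
    funext i; fin_cases i <;> rfl
  rw [this]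
  induction r using MvPolynomial.induction_on with
  | C a => simp
  | add p q hp hq => simp only [map_add, hp, hq]
  | mul_X p i hp => simp only [map_mul, aeval_X, rename_X, hp]

lemma pd0_rename (r : MvPolynomial (Fin 3) ℝ) : pderiv 0 (rename Fin.succ r) = 0 := by
  apply pderiv_eq_zero_of_notMem_vars
  intro h
  obtain ⟨i, _, hi⟩ := mem_vars_rename _ _ h
  exact Fin.succ_ne_zero i hi



lemma eval_mono3 (w₀ : ℝ) (μ : Fin 3 →₀ ℕ) (c : ℝ) :
    eval ![0, w₀ - 1, w₀] (monomial μ c)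
      = c * 0 ^ (μ 0) * (w₀ - 1) ^ (μ 1) * w₀ ^ (μ 2) := by
  rw [eval_monomial, Finsupp.prod_pow, Fin.prod_univ_three]
  simp [mul_assoc]

lemma sub_app0 (m : Fin 3 →₀ ℕ) : (m - Finsupp.single 0 1 : Fin 3 →₀ ℕ) 0 = m 0 - 1 := by
  simp [Finsupp.tsub_apply, Finsupp.single_apply]
lemma sub_app1 (m : Fin 3 →₀ ℕ) : (m - Finsupp.single 0 1 : Fin 3 →₀ ℕ) 1 = m 1 := by
  simp [Finsupp.tsub_apply, Finsupp.single_apply]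
lemma sub_app2 (m : Fin 3 →₀ ℕ) : (m - Finsupp.single 0 1 : Fin 3 →₀ ℕ) 2 = m 2 := by
  simp [Finsupp.tsub_apply, Finsupp.single_apply]

lemma permono (s t k : ℕ) (w₀ : ℝ) (m : Fin 3 →₀ ℕ) (c : ℝ)
    (hm1 : m 1 ≤ s) (hm2 : m 2 ≤ t) (hdeg : m 0 + m 1 + m 2 = k) :
    ((s - m 1 : ℕ) : ℝ) * ((w₀ - 1) * eval ![0, w₀ - 1, w₀] (pderiv 0 (monomial m c)))
      + ((t - m 2 : ℕ) : ℝ) * (w₀ * eval ![0, w₀ - 1, w₀] (pderiv 0 (monomial m c)))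
    = ((s : ℝ) - k + 1) * (w₀ - 1) * eval ![0, w₀ - 1, w₀] (pderiv 0 (monomial m c))
      + ((t : ℝ) - k + 1) * w₀ * eval ![0, w₀ - 1, w₀] (pderiv 0 (monomial m c))
      + w₀ * (w₀ - 1) * (eval ![0, w₀ - 1, w₀] (pderiv 1 (pderiv 0 (monomial m c)))
          + eval ![0, w₀ - 1, w₀] (pderiv 2 (pderiv 0 (monomial m c)))) := by
  have e1 : (m - Finsupp.single 0 1 - Finsupp.single 1 1 : Fin 3 →₀ ℕ) 0 = m 0 - 1 := by
    simp [Finsupp.tsub_apply, Finsupp.single_apply]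
  have e2 : (m - Finsupp.single 0 1 - Finsupp.single 1 1 : Fin 3 →₀ ℕ) 1 = m 1 - 1 := by
    simp [Finsupp.tsub_apply, Finsupp.single_apply]
  have e3 : (m - Finsupp.single 0 1 - Finsupp.single 1 1 : Fin 3 →₀ ℕ) 2 = m 2 := by
    simp [Finsupp.tsub_apply, Finsupp.single_apply]
  have f1 : (m - Finsupp.single 0 1 - Finsupp.single 2 1 : Fin 3 →₀ ℕ) 0 = m 0 - 1 := by
    simp [Finsupp.tsub_apply, Finsupp.single_apply]
  have f2 : (m - Finsupp.single 0 1 - Finsupp.single 2 1 : Fin 3 →₀ ℕ) 1 = m 1 := by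
    simp [Finsupp.tsub_apply, Finsupp.single_apply]
  have f3 : (m - Finsupp.single 0 1 - Finsupp.single 2 1 : Fin 3 →₀ ℕ) 2 = m 2 - 1 := by
    simp [Finsupp.tsub_apply, Finsupp.single_apply]
  have H1 : (w₀ - 1) * eval ![0, w₀ - 1, w₀] (pderiv 1 (pderiv 0 (monomial m c)))
      = (m 1 : ℝ) * eval ![0, w₀ - 1, w₀] (pderiv 0 (monomial m c)) := by
    rw [pderiv_monomial, pderiv_monomial, eval_mono3, eval_mono3,
      e1, e2, e3, sub_app0, sub_app1, sub_app2]
    rcases hc : m 1 with _ | n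
    · simp [hc]
    · rw [Nat.succ_sub_one, pow_succ]
      push_cast
      ring
  have H2 : w₀ * eval ![0, w₀ - 1, w₀] (pderiv 2 (pderiv 0 (monomial m c)))
      = (m 2 : ℝ) * eval ![0, w₀ - 1, w₀] (pderiv 0 (monomial m c)) := by
    rw [pderiv_monomial, pderiv_monomial, eval_mono3, eval_mono3,
      f1, f2, f3, sub_app0, sub_app1, sub_app2]
    rcases hc : m 2 with _ | n
    · simp [hc]
    · rw [Nat.succ_sub_one, pow_succ]
      push_cast
      ring
  have H3 : ((m 0 : ℝ) - 1) * eval ![0, w₀ - 1, w₀] (pderiv 0 (monomial m c)) = 0 := by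
    rw [pderiv_monomial, eval_mono3, sub_app0, sub_app1, sub_app2]
    rcases hc : m 0 with _ | n
    · simp
    · rcases n with _ | l
      · norm_num
      · simp [pow_succ]
  have c1 : ((s - m 1 : ℕ) : ℝ) = (s : ℝ) - (m 1 : ℝ) := by
    rw [Nat.cast_sub hm1]
  have c2 : ((t - m 2 : ℕ) : ℝ) = (t : ℝ) - (m 2 : ℝ) := by
    rw [Nat.cast_sub hm2]
  have cdeg : (m 0 : ℝ) + (m 1 : ℝ) + (m 2 : ℝ) = (k : ℝ) := by
    exact_mod_cast congrArg (Nat.cast : ℕ → ℝ) hdeg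
  rw [c1, c2]
  linear_combination (-w₀) * H1 - (w₀ - 1) * H2 + (2 * w₀ - 1) * H3
    - (2 * w₀ - 1) * eval ![0, w₀ - 1, w₀] (pderiv 0 (monomial m c)) * cdeg


def g3 : Fin 3 → MvPolynomial (Fin 2) ℝ := ![X 0, X 1 - 1, X 1]

lemma g3_pd0 (q : MvPolynomial (Fin 3) ℝ) :
    pderiv 0 (aeval g3 q) = aeval g3 (pderiv 0 q) := by
  rw [pderiv_aeval_fin, Fin.sum_univ_three]
  simp [g3, pderiv_X_of_ne, map_sub, pderiv_one]

lemma g3_pd1 (q : MvPolynomial (Fin 3) ℝ) :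
    pderiv 1 (aeval g3 q) = aeval g3 (pderiv 1 q) + aeval g3 (pderiv 2 q) := by
  rw [pderiv_aeval_fin, Fin.sum_univ_three]
  simp [g3, pderiv_X_of_ne, map_sub, pderiv_one]

lemma eval_aeval_g3 (w₀ : ℝ) (q : MvPolynomial (Fin 3) ℝ) :
    eval ![0, w₀] (aeval g3 q) = eval ![0, w₀ - 1, w₀] q := by
  rw [eval_aeval_fin]
  have : (fun i => eval ![(0:ℝ), w₀] (g3 i)) = ![0, w₀ - 1, w₀] := by
    funext i; fin_cases i <;> simp [g3]
  rw [this]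

lemma gG_pd0 (q : MvPolynomial (Fin 4) ℝ) :
    pderiv 0 (aeval gG q) = aeval gG (pderiv 0 q) := by
  rw [pderiv_aeval_fin, Fin.sum_univ_four]
  simp [gG, pderiv_X_of_ne, map_sub, pderiv_one]

lemma gG_pd1 (q : MvPolynomial (Fin 4) ℝ) :
    pderiv 1 (aeval gG q) = aeval gG (pderiv 2 q) + aeval gG (pderiv 3 q) := by
  rw [pderiv_aeval_fin, Fin.sum_univ_four]
  simp [gG, pderiv_X_of_ne, map_sub, pderiv_one]

lemma eval_aeval_gG (θ u : ℝ) (q : MvPolynomial (Fin 4) ℝ) :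
    eval ![θ, u] (aeval gG q) = eval ![θ, 0, u - 1, u] q := by
  rw [eval_aeval_fin]
  have : (fun i => eval ![θ, u] (gG i)) = ![θ, 0, u - 1, u] := by
    funext i; fin_cases i <;> simp [gG]
  rw [this]

lemma eval4_ψ (v : Fin 4 → ℝ) (hv : v 0 = 0) (q : MvPolynomial (Fin 4) ℝ) :
    eval v (ψ q) = eval v q := by
  rw [ψ, eval_aeval_fin]
  have : (fun i => eval v (gψ i)) = v := by
    funext i; fin_cases i <;> simp [gψ, hv.symm]
  rw [this]

lemma ψ_Q4 (s t : ℕ) (p : MvPolynomial (Fin 3) ℝ) :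
    ψ (Q4 s t p) = rename Fin.succ p := by
  rw [Q4, map_sum]
  have : ∀ m ∈ p.support, ψ (SY^[s - m 1] (SZ^[t - m 2] (rename Fin.succ (monomial m (coeff m p)))))
      = rename Fin.succ (monomial m (coeff m p)) := by
    intro m _
    rw [ψ_SY_iter, ψ_SZ_iter, ψ_rename]
  rw [Finset.sum_congr rfl this, ← map_sum, support_sum_monomial_coeff]

lemma succ0 : (Fin.succ 0 : Fin 4) = 1 := rfl
lemma succ1 : (Fin.succ 1 : Fin 4) = 2 := rfl
lemma succ2 : (Fin.succ 2 : Fin 4) = 3 := rfl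

lemma pd1_rename (r : MvPolynomial (Fin 3) ℝ) :
    pderiv 1 (rename Fin.succ r) = rename Fin.succ (pderiv 0 r) := by
  rw [← succ0, pderiv_rename (Fin.succ_injective 3)]

lemma ψ_pd0_Q4 (s t : ℕ) (p : MvPolynomial (Fin 3) ℝ) :
    ψ (pderiv 0 (Q4 s t p)) = ∑ m ∈ p.support,
      ((s - m 1) • ((X 2 : MvPolynomial (Fin 4) ℝ)
          * rename Fin.succ (pderiv 0 (monomial m (coeff m p))))
        + (t - m 2) • ((X 3 : MvPolynomial (Fin 4) ℝ)
          * rename Fin.succ (pderiv 0 (monomial m (coeff m p))))) := by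
  rw [Q4, map_sum, map_sum]
  refine Finset.sum_congr rfl fun m _ => ?_
  rw [ψ_pd0_SY_iter, ψ_pd0_SZ_iter, ψ_SZ_iter, ψ_rename, pd0_rename, map_zero,
    zero_add, pd1_rename, add_comm]

/-- evaluation vector composition -/
lemma v4_succ (w₀ : ℝ) : (![0, 0, w₀ - 1, w₀] ∘ Fin.succ : Fin 3 → ℝ) = ![0, w₀ - 1, w₀] := by
  funext i; fin_cases i <;> rfl


lemma hSub_eq (p : MvPolynomial (Fin 3) ℝ) : hSub p = aeval g3 p := rfl

lemma hdeg_of_mem {k : ℕ} {p : MvPolynomial (Fin 3) ℝ} (hhom : p.IsHomogeneous k)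
    {m : Fin 3 →₀ ℕ} (hm : m ∈ p.support) : m 0 + m 1 + m 2 = k := by
  have h := hhom (MvPolynomial.mem_support_iff.mp hm)
  rw [Finsupp.weight_apply, Finsupp.sum_fintype _ _ (fun i => by simp),
    Fin.sum_univ_three] at h
  simpa using h

end S16

theorem stmt16 (k s t : ℕ) (hk : 1 ≤ k) (p : MvPolynomial (Fin 3) ℝ)
    (hhom : p.IsHomogeneous k) (hs : p.degreeOf 1 ≤ s) (ht : p.degreeOf 2 ≤ t)
    (w : ℝ → ℝ) (w₀ : ℝ) (hw : DifferentiableAt ℝ w 0) (hw0 : w 0 = w₀)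
    (hzero : ∀ᶠ θ in nhds (0 : ℝ),
      eval ![(0 : ℝ), w θ - 1, w θ] (Qop s t θ p) = 0) :
    deriv w 0 * eval ![(0 : ℝ), w₀] (pderiv 1 (hSub p))
      = -(((s : ℝ) - k + 1) * (w₀ - 1) + ((t : ℝ) - k + 1) * w₀) *
            eval ![(0 : ℝ), w₀] (pderiv 0 (hSub p))
        - w₀ * (w₀ - 1) * eval ![(0 : ℝ), w₀] (pderiv 1 (pderiv 0 (hSub p))) := by

  classical
  open S16 in
  -- derivative of θ ↦ eval ![θ, w θ] G is zero
  have hd : HasDerivAt (fun θ => eval ![θ, w θ] (G s t p))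
      (1 * eval ![(0:ℝ), w 0] (pderiv 0 (G s t p))
        + deriv w 0 * eval ![(0:ℝ), w 0] (pderiv 1 (G s t p))) 0 := by
    have := S16.hasDerivAt_eval_two (G s t p) id w 1 (deriv w 0) 0
      (hasDerivAt_id 0) hw.hasDerivAt
    simpa using this
  have heq : (fun θ => eval ![θ, w θ] (S16.G s t p)) =ᶠ[nhds 0] (fun _ => (0:ℝ)) :=
    hzero.mono (fun θ h => by show eval ![θ, w θ] (S16.G s t p) = 0; rw [S16.eval_G]; exact h)
  have hD : 1 * eval ![(0:ℝ), w 0] (pderiv 0 (S16.G s t p))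
      + deriv w 0 * eval ![(0:ℝ), w 0] (pderiv 1 (S16.G s t p)) = 0 :=
    (hd.congr_of_eventuallyEq heq.symm).unique (hasDerivAt_const 0 0)
  rw [hw0] at hD
  -- compute eval of pderiv 1 G
  have hP1G : eval ![(0:ℝ), w₀] (pderiv 1 (S16.G s t p))
      = eval ![(0:ℝ), w₀ - 1, w₀] (pderiv 1 p) + eval ![(0:ℝ), w₀ - 1, w₀] (pderiv 2 p) := by
    rw [S16.G, S16.gG_pd1, map_add, S16.eval_aeval_gG, S16.eval_aeval_gG]
    have h2 : eval ![(0:ℝ), 0, w₀ - 1, w₀] (pderiv 2 (S16.Q4 s t p))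
        = eval ![(0:ℝ), w₀ - 1, w₀] (pderiv 1 p) := by
      rw [← S16.eval4_ψ ![(0:ℝ), 0, w₀ - 1, w₀] rfl, ← S16.ψ_pderiv2, S16.ψ_Q4,
        ← S16.succ1, pderiv_rename (Fin.succ_injective 3), eval_rename, S16.v4_succ]
    have h3 : eval ![(0:ℝ), 0, w₀ - 1, w₀] (pderiv 3 (S16.Q4 s t p))
        = eval ![(0:ℝ), w₀ - 1, w₀] (pderiv 2 p) := by
      rw [← S16.eval4_ψ ![(0:ℝ), 0, w₀ - 1, w₀] rfl, ← S16.ψ_pderiv3, S16.ψ_Q4,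
        ← S16.succ2, pderiv_rename (Fin.succ_injective 3), eval_rename, S16.v4_succ]
    rw [h2, h3]
  -- compute eval of pderiv 0 G
  have hP0G : eval ![(0:ℝ), w₀] (pderiv 0 (S16.G s t p))
      = ((s:ℝ) - k + 1) * (w₀ - 1) * eval ![(0:ℝ), w₀ - 1, w₀] (pderiv 0 p)
        + ((t:ℝ) - k + 1) * w₀ * eval ![(0:ℝ), w₀ - 1, w₀] (pderiv 0 p)
        + w₀ * (w₀ - 1) * (eval ![(0:ℝ), w₀ - 1, w₀] (pderiv 1 (pderiv 0 p))
            + eval ![(0:ℝ), w₀ - 1, w₀] (pderiv 2 (pderiv 0 p))) := by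
    rw [S16.G, S16.gG_pd0, S16.eval_aeval_gG,
      ← S16.eval4_ψ ![(0:ℝ), 0, w₀ - 1, w₀] rfl, S16.ψ_pd0_Q4, map_sum]
    have hterm : ∀ m ∈ p.support,
        eval ![(0:ℝ), 0, w₀ - 1, w₀]
          ((s - m 1) • ((X 2 : MvPolynomial (Fin 4) ℝ)
              * rename Fin.succ (pderiv 0 (monomial m (coeff m p))))
            + (t - m 2) • ((X 3 : MvPolynomial (Fin 4) ℝ)
              * rename Fin.succ (pderiv 0 (monomial m (coeff m p)))))
        = ((s:ℝ) - k + 1) * (w₀ - 1) * eval ![(0:ℝ), w₀-1, w₀] (pderiv 0 (monomial m (coeff m p)))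
          + ((t:ℝ) - k + 1) * w₀ * eval ![(0:ℝ), w₀-1, w₀] (pderiv 0 (monomial m (coeff m p)))
          + w₀ * (w₀ - 1) * (eval ![(0:ℝ), w₀-1, w₀] (pderiv 1 (pderiv 0 (monomial m (coeff m p))))
              + eval ![(0:ℝ), w₀-1, w₀] (pderiv 2 (pderiv 0 (monomial m (coeff m p))))) := by
      intro m hm
      have hm1 : m 1 ≤ s := le_trans (monomial_le_degreeOf 1 hm) hs
      have hm2 : m 2 ≤ t := le_trans (monomial_le_degreeOf 2 hm) ht
      have hdeg : m 0 + m 1 + m 2 = k := S16.hdeg_of_mem hhom hm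
      have hstep : eval ![(0:ℝ), 0, w₀ - 1, w₀]
          ((s - m 1) • ((X 2 : MvPolynomial (Fin 4) ℝ)
              * rename Fin.succ (pderiv 0 (monomial m (coeff m p))))
            + (t - m 2) • ((X 3 : MvPolynomial (Fin 4) ℝ)
              * rename Fin.succ (pderiv 0 (monomial m (coeff m p)))))
          = ((s - m 1 : ℕ) : ℝ) * ((w₀ - 1) * eval ![(0:ℝ), w₀-1, w₀] (pderiv 0 (monomial m (coeff m p))))
            + ((t - m 2 : ℕ) : ℝ) * (w₀ * eval ![(0:ℝ), w₀-1, w₀] (pderiv 0 (monomial m (coeff m p)))) := by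
        rw [map_add, map_nsmul, map_nsmul, map_mul, map_mul, eval_X, eval_X,
          eval_rename, S16.v4_succ, nsmul_eq_mul, nsmul_eq_mul]
        norm_num
        rfl
      rw [hstep]
      exact S16.permono s t k w₀ m (coeff m p) hm1 hm2 hdeg
    rw [Finset.sum_congr rfl hterm]
    have hsum0 : ∑ m ∈ p.support, eval ![(0:ℝ), w₀-1, w₀] (pderiv 0 (monomial m (coeff m p)))
        = eval ![(0:ℝ), w₀-1, w₀] (pderiv 0 p) := by
      rw [← map_sum, ← map_sum, support_sum_monomial_coeff]
    have hsum1 : ∑ m ∈ p.support, eval ![(0:ℝ), w₀-1, w₀] (pderiv 1 (pderiv 0 (monomial m (coeff m p))))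
        = eval ![(0:ℝ), w₀-1, w₀] (pderiv 1 (pderiv 0 p)) := by
      rw [← map_sum, ← map_sum, ← map_sum, support_sum_monomial_coeff]
    have hsum2 : ∑ m ∈ p.support, eval ![(0:ℝ), w₀-1, w₀] (pderiv 2 (pderiv 0 (monomial m (coeff m p))))
        = eval ![(0:ℝ), w₀-1, w₀] (pderiv 2 (pderiv 0 p)) := by
      rw [← map_sum, ← map_sum, ← map_sum, support_sum_monomial_coeff]
    rw [Finset.sum_add_distrib, Finset.sum_add_distrib, ← Finset.mul_sum, ← Finset.mul_sum,
      ← Finset.mul_sum, Finset.sum_add_distrib, hsum0, hsum1, hsum2]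
  -- hSub computations
  have hS1 : eval ![(0:ℝ), w₀] (pderiv 1 (hSub p))
      = eval ![(0:ℝ), w₀ - 1, w₀] (pderiv 1 p) + eval ![(0:ℝ), w₀ - 1, w₀] (pderiv 2 p) := by
    rw [S16.hSub_eq, S16.g3_pd1, map_add, S16.eval_aeval_g3, S16.eval_aeval_g3]
  have hS0 : eval ![(0:ℝ), w₀] (pderiv 0 (hSub p))
      = eval ![(0:ℝ), w₀ - 1, w₀] (pderiv 0 p) := by
    rw [S16.hSub_eq, S16.g3_pd0, S16.eval_aeval_g3]
  have hS10 : eval ![(0:ℝ), w₀] (pderiv 1 (pderiv 0 (hSub p)))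
      = eval ![(0:ℝ), w₀ - 1, w₀] (pderiv 1 (pderiv 0 p))
        + eval ![(0:ℝ), w₀ - 1, w₀] (pderiv 2 (pderiv 0 p)) := by
    rw [S16.hSub_eq, S16.g3_pd0, S16.g3_pd1, map_add, S16.eval_aeval_g3, S16.eval_aeval_g3]
  rw [hS1, hS0, hS10]
  rw [hP0G, hP1G] at hD
  linear_combination hD


end
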